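/- Let A_1, ..., A_N ∈ ℝ^{n×n} and let P_1 ∈ ℝ^{n×n} be symmetric positive definite with P_1 A_j + A_jᵀ P_1 ≼ 0 for all j = 1, ..., N. Then for every integer i ≥ 1, the block-diagonal matrix 𝒫_i = diag(P_1, ⊗²P_1, ..., ⊗ⁱP_1) is symmetric positive definite and satisfies 𝒫_i Ãⁱ(A_j) + Ãⁱ(A_j)ᵀ 𝒫_i ≼ 0 for all j = 1, ..., N. -/

import Mathlib

open Matrix

noncomputable section

/-- `M ≼ 0` for a (symmetric) matrix: `ξᵀ M ξ ≤ 0` for all `ξ`. -/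
def NegSemidef {m : Type*} [Fintype m] (M : Matrix m m ℝ) : Prop :=
  ∀ x : m → ℝ, x ⬝ᵥ M *ᵥ x ≤ 0

/-- Index type for Kronecker powers: `kronIdx n k` indexes the `(k+1)`-st Kronecker power
of an `n`-dimensional object. -/
def kronIdx (n : ℕ) : ℕ → Type
  | 0 => Fin n
  | k+1 => Fin n × kronIdx n k

instance kronIdxFintype (n : ℕ) : ∀ k, Fintype (kronIdx n k)
  | 0 => inferInstanceAs (Fintype (Fin n))
  | k+1 => @instFintypeProd _ _ _ (kronIdxFintype n k)

instance kronIdxDecEq (n : ℕ) : ∀ k, DecidableEq (kronIdx n k)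
  | 0 => inferInstanceAs (DecidableEq (Fin n))
  | k+1 => @instDecidableEqProd _ _ _ (kronIdxDecEq n k)

/-- `matKronPow M k = ⊗^{k+1} M`, the `(k+1)`-st Kronecker power of the matrix `M`
(so `matKronPow M 0 = ⊗¹M = M`). -/
def matKronPow {n : ℕ} (M : Matrix (Fin n) (Fin n) ℝ) : ∀ k, Matrix (kronIdx n k) (kronIdx n k) ℝ
  | 0 => M
  | k+1 => Matrix.kroneckerMap (· * ·) M (matKronPow M k)

/-- Kronecker product of two vectors. -/
def vecKron {α β : Type*} (u : α → ℝ) (v : β → ℝ) : α × β → ℝ := fun p => u p.1 * v p.2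

/-- `vecKronPow x k = ⊗^{k+1} x`, the `(k+1)`-st Kronecker power of the vector `x`. -/
def vecKronPow {n : ℕ} (x : Fin n → ℝ) : ∀ k, kronIdx n k → ℝ
  | 0 => x
  | k+1 => vecKron x (vecKronPow x k)

/-- The lifted matrices: `liftA A k = 𝒜^{k+1}(A)`, with `𝒜¹(A) = A` and
`𝒜^{k+1}(A) = Iₙ ⊗ 𝒜^k(A) + A ⊗ I_{n^k}`. -/
def liftA {n : ℕ} (A : Matrix (Fin n) (Fin n) ℝ) : ∀ k, Matrix (kronIdx n k) (kronIdx n k) ℝ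
  | 0 => A
  | k+1 => Matrix.kroneckerMap (· * ·) (1 : Matrix (Fin n) (Fin n) ℝ) (liftA A k)
      + Matrix.kroneckerMap (· * ·) A (1 : Matrix (kronIdx n k) (kronIdx n k) ℝ)

/-- Index type of the stacked hierarchy system of degree `i`: blocks `k = 0, …, i-1`
corresponding to Kronecker powers `1, …, i`; its cardinality is `ñ_i = n + n² + ⋯ + nⁱ`. -/
abbrev tildeIdx (n i : ℕ) : Type := Σ k : Fin i, kronIdx n k

/-- `Ãⁱ(A) = diag(𝒜¹(A), 𝒜²(A), …, 𝒜ⁱ(A))`. -/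
def tildeA {n : ℕ} (A : Matrix (Fin n) (Fin n) ℝ) (i : ℕ) :
    Matrix (tildeIdx n i) (tildeIdx n i) ℝ :=
  Matrix.blockDiagonal' (fun k : Fin i => liftA A k)

/-- `diag(P, ⊗²P, …, ⊗ⁱP)`. -/
def tildeKronPow {n : ℕ} (P : Matrix (Fin n) (Fin n) ℝ) (i : ℕ) :
    Matrix (tildeIdx n i) (tildeIdx n i) ℝ :=
  Matrix.blockDiagonal' (fun k : Fin i => matKronPow P k)

/-- `ξ̃_i(x) = (x, ⊗²x, …, ⊗ⁱx)`, the stacked vector of Kronecker powers of `x`. -/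
def tildeXi {n : ℕ} (i : ℕ) (x : Fin n → ℝ) : tildeIdx n i → ℝ :=
  fun p => vecKronPow x p.1 p.2

section Helpers
open Kronecker


variable {α β : Type*} [Fintype α] [Fintype β]

lemma NegSemidef.add' {M N : Matrix α α ℝ} (hM : NegSemidef M) (hN : NegSemidef N) :
    NegSemidef (M + N) := fun x => by
  simp only [Matrix.add_mulVec, dotProduct_add]
  exact add_nonpos (hM x) (hN x)

lemma NegSemidef.conj {M : Matrix α β ℝ} {N : Matrix α α ℝ} (hN : NegSemidef N) :
    NegSemidef (Mᵀ * (N * M)) := fun x => by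
  rw [← Matrix.mulVec_mulVec, ← Matrix.mulVec_mulVec, Matrix.dotProduct_mulVec,
    Matrix.vecMul_transpose]
  exact hN (M *ᵥ x)

lemma negSemidef_one_kron [DecidableEq α] {S : Matrix β β ℝ} (hS : NegSemidef S) :
    NegSemidef ((1 : Matrix α α ℝ) ⊗ₖ S) := by
  intro x
  have key : x ⬝ᵥ ((1 : Matrix α α ℝ) ⊗ₖ S) *ᵥ x
      = ∑ a : α, (fun c => x (a, c)) ⬝ᵥ S *ᵥ (fun c => x (a, c)) := by
    simp [dotProduct, Matrix.mulVec, Fintype.sum_prod_type, Matrix.one_apply,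
      ite_mul, Finset.mul_sum, mul_assoc]
  rw [key]
  exact Finset.sum_nonpos fun a _ => hS _

lemma negSemidef_kron_one [DecidableEq β] {S : Matrix α α ℝ} (hS : NegSemidef S) :
    NegSemidef (S ⊗ₖ (1 : Matrix β β ℝ)) := by
  intro x
  have key : x ⬝ᵥ (S ⊗ₖ (1 : Matrix β β ℝ)) *ᵥ x
      = ∑ c : β, (fun a => x (a, c)) ⬝ᵥ S *ᵥ (fun a => x (a, c)) := by
    simp [dotProduct, Matrix.mulVec, Fintype.sum_prod_type, Matrix.one_apply,
      mul_ite, Finset.mul_sum, mul_assoc]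
    rw [Finset.sum_comm]
  rw [key]
  exact Finset.sum_nonpos fun a _ => hS _



variable {α β : Type*} [Fintype α] [Fintype β]



open scoped MatrixOrder in
/-- Square root of a positive semidefinite real matrix. -/
noncomputable def Matrix.PosSemidef.sqrt {P : Matrix α α ℝ} [DecidableEq α] (_hP : P.PosSemidef) :
    Matrix α α ℝ := CFC.sqrt P

open scoped MatrixOrder in
lemma Matrix.PosSemidef.posSemidef_sqrt {P : Matrix α α ℝ} [DecidableEq α] (hP : P.PosSemidef) :
    hP.sqrt.PosSemidef := (CFC.sqrt_nonneg P).posSemidef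

open scoped MatrixOrder in
lemma Matrix.PosSemidef.sqrt_mul_self {P : Matrix α α ℝ} [DecidableEq α] (hP : P.PosSemidef) :
    hP.sqrt * hP.sqrt = P := CFC.sqrt_mul_sqrt_self P hP.nonneg

lemma sqrt_transpose {P : Matrix α α ℝ} [DecidableEq α] (hP : P.PosSemidef) :
    (hP.sqrt)ᵀ = hP.sqrt := by
  have h := hP.posSemidef_sqrt.1
  rwa [Matrix.IsHermitian, Matrix.conjTranspose_eq_transpose_of_trivial] at h

lemma posSemidef_kron_negSemidef [DecidableEq α] [DecidableEq β]
    {P : Matrix α α ℝ} {S : Matrix β β ℝ} (hP : P.PosSemidef) (hS : NegSemidef S) :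
    NegSemidef (P ⊗ₖ S) := by
  have key : P ⊗ₖ S
      = (hP.sqrt ⊗ₖ (1 : Matrix β β ℝ))ᵀ
        * (((1 : Matrix α α ℝ) ⊗ₖ S) * (hP.sqrt ⊗ₖ (1 : Matrix β β ℝ))) := by
    rw [← Matrix.kroneckerMap_transpose, sqrt_transpose hP, Matrix.transpose_one,
      ← Matrix.mul_kronecker_mul, ← Matrix.mul_kronecker_mul, one_mul, mul_one,
      Matrix.PosSemidef.sqrt_mul_self, one_mul]
  rw [key]
  exact (negSemidef_one_kron hS).conj

lemma negSemidef_kron_posSemidef [DecidableEq α] [DecidableEq β]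
    {S : Matrix α α ℝ} {Q : Matrix β β ℝ} (hS : NegSemidef S) (hQ : Q.PosSemidef) :
    NegSemidef (S ⊗ₖ Q) := by
  have key : S ⊗ₖ Q
      = ((1 : Matrix α α ℝ) ⊗ₖ hQ.sqrt)ᵀ
        * ((S ⊗ₖ (1 : Matrix β β ℝ)) * ((1 : Matrix α α ℝ) ⊗ₖ hQ.sqrt)) := by
    rw [← Matrix.kroneckerMap_transpose, sqrt_transpose hQ, Matrix.transpose_one,
      ← Matrix.mul_kronecker_mul, ← Matrix.mul_kronecker_mul]
    simp only [one_mul, mul_one]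
    rw [Matrix.PosSemidef.sqrt_mul_self]
  rw [key]
  exact (negSemidef_kron_one hS).conj

lemma posDef_kron [DecidableEq α] [DecidableEq β]
    {P : Matrix α α ℝ} {Q : Matrix β β ℝ} (hP : P.PosDef) (hQ : Q.PosDef) :
    (P ⊗ₖ Q).PosDef := by
  set C := hP.posSemidef.sqrt with hC
  set D := hQ.posSemidef.sqrt with hD
  have hCt : Cᵀ = C := sqrt_transpose hP.posSemidef
  have hDt : Dᵀ = D := sqrt_transpose hQ.posSemidef
  have key : P ⊗ₖ Q = (C ⊗ₖ D)ᵀ * (C ⊗ₖ D) := by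
    rw [← Matrix.kroneckerMap_transpose, hCt, hDt, ← Matrix.mul_kronecker_mul,
      Matrix.PosSemidef.sqrt_mul_self, Matrix.PosSemidef.sqrt_mul_self]
  have hdetC : C.det ≠ 0 := by
    have : C.det * C.det = P.det := by
      rw [← Matrix.det_mul, Matrix.PosSemidef.sqrt_mul_self]
    intro h; rw [h, mul_zero] at this
    exact hP.det_pos.ne' this.symm
  have hdetD : D.det ≠ 0 := by
    have : D.det * D.det = Q.det := by
      rw [← Matrix.det_mul, Matrix.PosSemidef.sqrt_mul_self]
    intro h; rw [h, mul_zero] at this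
    exact hQ.det_pos.ne' this.symm
  have hdet : (C ⊗ₖ D).det ≠ 0 := by
    rw [Matrix.det_kronecker]
    exact mul_ne_zero (pow_ne_zero _ hdetC) (pow_ne_zero _ hdetD)
  have hinj : Function.Injective ((C ⊗ₖ D).mulVec) :=
    Matrix.mulVec_injective_iff_isUnit.2 ((Matrix.isUnit_iff_isUnit_det _).2 (isUnit_iff_ne_zero.2 hdet))
  rw [Matrix.posDef_iff_dotProduct_mulVec]
  constructor
  · have h1 := hP.1; have h2 := hQ.1
    rw [Matrix.IsHermitian, Matrix.conjTranspose_eq_transpose_of_trivial] at h1 h2 ⊢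
    rw [← Matrix.kroneckerMap_transpose, h1, h2]
  · intro x hx
    have hvx : (C ⊗ₖ D) *ᵥ x ≠ 0 := by
      intro h
      exact hx (hinj (by rw [h, Matrix.mulVec_zero]))
    have hq : star x ⬝ᵥ (P ⊗ₖ Q) *ᵥ x = ((C ⊗ₖ D) *ᵥ x) ⬝ᵥ ((C ⊗ₖ D) *ᵥ x) := by
      rw [key, star_trivial, ← Matrix.mulVec_mulVec, Matrix.dotProduct_mulVec,
        Matrix.vecMul_transpose]
    rw [hq]
    rcases lt_or_eq_of_le (Finset.sum_nonneg fun i _ =>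
        mul_self_nonneg (((C ⊗ₖ D) *ᵥ x) i) : (0:ℝ) ≤ ((C ⊗ₖ D) *ᵥ x) ⬝ᵥ ((C ⊗ₖ D) *ᵥ x)) with h | h
    · exact h
    · exact absurd (dotProduct_self_eq_zero.1 h.symm) hvx



section BD
variable {ι : Type*} [Fintype ι] [DecidableEq ι]
  {m : ι → Type*} [∀ i, Fintype (m i)]

lemma blockDiagonal'_mulVec_apply (M : ∀ i, Matrix (m i) (m i) ℝ)
    (x : (Σ i, m i) → ℝ) (k : ι) (i : m k) :
    (Matrix.blockDiagonal' M *ᵥ x) ⟨k, i⟩ = (M k *ᵥ fun j => x ⟨k, j⟩) i := by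
  simp only [Matrix.mulVec, dotProduct, ← Finset.univ_sigma_univ, Finset.sum_sigma]
  rw [Finset.sum_eq_single k]
  · simp [Matrix.blockDiagonal'_apply_eq]
  · intro l _ hl
    exact Finset.sum_eq_zero fun j _ => by
      rw [Matrix.blockDiagonal'_apply_ne _ _ _ (Ne.symm hl), zero_mul]
  · intro h; exact absurd (Finset.mem_univ k) h

lemma dotProduct_blockDiagonal'_mulVec (M : ∀ i, Matrix (m i) (m i) ℝ)
    (x : (Σ i, m i) → ℝ) :
    x ⬝ᵥ Matrix.blockDiagonal' M *ᵥ x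
      = ∑ k : ι, (fun j => x ⟨k, j⟩) ⬝ᵥ M k *ᵥ (fun j => x ⟨k, j⟩) := by
  rw [dotProduct, ← Finset.univ_sigma_univ, Finset.sum_sigma]
  refine Finset.sum_congr rfl fun k _ => Finset.sum_congr rfl fun i _ => ?_
  rw [blockDiagonal'_mulVec_apply]

lemma negSemidef_blockDiagonal' {M : ∀ i, Matrix (m i) (m i) ℝ}
    (h : ∀ k, NegSemidef (M k)) : NegSemidef (Matrix.blockDiagonal' M) := by
  intro x
  rw [dotProduct_blockDiagonal'_mulVec]
  exact Finset.sum_nonpos fun k _ => h k _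

lemma posDef_blockDiagonal' [∀ i, DecidableEq (m i)] {M : ∀ i, Matrix (m i) (m i) ℝ}
    (h : ∀ k, (M k).PosDef) : (Matrix.blockDiagonal' M).PosDef := by
  rw [Matrix.posDef_iff_dotProduct_mulVec]
  constructor
  · rw [Matrix.IsHermitian, Matrix.conjTranspose_eq_transpose_of_trivial,
      Matrix.blockDiagonal'_transpose]
    have heq : (fun k => (M k)ᵀ) = M := funext fun k => by
      have := (h k).1
      rwa [Matrix.IsHermitian, Matrix.conjTranspose_eq_transpose_of_trivial] at this
    rw [heq]
  · intro x hx
    rw [star_trivial, dotProduct_blockDiagonal'_mulVec]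
    obtain ⟨⟨k0, i0⟩, hki⟩ : ∃ p, x p ≠ 0 := by
      by_contra h'
      push_neg at h'
      exact hx (funext h')
    refine Finset.sum_pos' (fun k _ => ?_) ⟨k0, Finset.mem_univ _, ?_⟩
    · have := (h k).posSemidef.dotProduct_mulVec_nonneg (fun j => x ⟨k, j⟩)
      rwa [star_trivial] at this
    · refine (h k0).dotProduct_mulVec_pos fun hz => hki ?_
      exact congrFun hz i0
end BD

end Helpers

section Main
open Kronecker

lemma perBlock {n N : ℕ} (A : Fin N → Matrix (Fin n) (Fin n) ℝ)
    (P₁ : Matrix (Fin n) (Fin n) ℝ) (hP : P₁.PosDef)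
    (hLyap : ∀ j, NegSemidef (P₁ * A j + (A j)ᵀ * P₁)) :
    ∀ k, (matKronPow P₁ k).PosDef ∧ ∀ j, NegSemidef
      (matKronPow P₁ k * liftA (A j) k + (liftA (A j) k)ᵀ * matKronPow P₁ k) := by
  intro k
  induction k with
  | zero => exact ⟨hP, hLyap⟩
  | succ k ih =>
    obtain ⟨hQ, hS⟩ := ih
    refine ⟨posDef_kron hP hQ, fun j => ?_⟩
    have halg : matKronPow P₁ (k+1) * liftA (A j) (k+1)
          + (liftA (A j) (k+1))ᵀ * matKronPow P₁ (k+1)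
        = P₁ ⊗ₖ (matKronPow P₁ k * liftA (A j) k + (liftA (A j) k)ᵀ * matKronPow P₁ k)
          + (P₁ * A j + (A j)ᵀ * P₁) ⊗ₖ matKronPow P₁ k := by
      show (P₁ ⊗ₖ matKronPow P₁ k) * ((1 : Matrix (Fin n) (Fin n) ℝ) ⊗ₖ liftA (A j) k
            + A j ⊗ₖ (1 : Matrix (kronIdx n k) (kronIdx n k) ℝ))
          + ((1 : Matrix (Fin n) (Fin n) ℝ) ⊗ₖ liftA (A j) k
            + A j ⊗ₖ (1 : Matrix (kronIdx n k) (kronIdx n k) ℝ))ᵀ * (P₁ ⊗ₖ matKronPow P₁ k)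
          = _
      simp only [Matrix.mul_add, Matrix.add_mul, Matrix.transpose_add,
        ← Matrix.kroneckerMap_transpose, Matrix.transpose_one,
        ← Matrix.mul_kronecker_mul, Matrix.kronecker_add, Matrix.add_kronecker,
        one_mul, mul_one]
      abel
    rw [halg]
    exact (posSemidef_kron_negSemidef hP.posSemidef (hS j)).add'
      (negSemidef_kron_posSemidef (hLyap j) hQ.posSemidef)

end Main


/-- if `P₁` is symmetric positive definite and `P₁ Aⱼ + Aⱼᵀ P₁ ≼ 0` for all `j`,
then for every `i ≥ 1` the block-diagonal matrix `𝒫_i = diag(P₁, ⊗²P₁, …, ⊗ⁱP₁)` is symmetric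
positive definite and `𝒫_i Ãⁱ(Aⱼ) + Ãⁱ(Aⱼ)ᵀ 𝒫_i ≼ 0` for all `j`. -/
theorem stmt0 {n N : ℕ} (A : Fin N → Matrix (Fin n) (Fin n) ℝ)
    (P₁ : Matrix (Fin n) (Fin n) ℝ) (hP : P₁.PosDef)
    (hLyap : ∀ j, NegSemidef (P₁ * A j + (A j)ᵀ * P₁)) :
    ∀ i : ℕ, 1 ≤ i →
      (tildeKronPow P₁ i).PosDef ∧
      ∀ j, NegSemidef
        (tildeKronPow P₁ i * tildeA (A j) i + (tildeA (A j) i)ᵀ * tildeKronPow P₁ i) := by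
  intro i _
  have hblocks := perBlock A P₁ hP hLyap
  refine ⟨posDef_blockDiagonal' (fun k : Fin i => (hblocks k).1), fun j => ?_⟩
  have key : tildeKronPow P₁ i * tildeA (A j) i + (tildeA (A j) i)ᵀ * tildeKronPow P₁ i
      = Matrix.blockDiagonal' (fun k : Fin i =>
          matKronPow P₁ k * liftA (A j) k + (liftA (A j) k)ᵀ * matKronPow P₁ k) := by
    unfold tildeKronPow tildeA
    rw [Matrix.blockDiagonal'_transpose, ← Matrix.blockDiagonal'_mul,
      ← Matrix.blockDiagonal'_mul, ← Matrix.blockDiagonal'_add]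
    rfl
  rw [key]
  exact negSemidef_blockDiagonal' fun k => (hblocks k).2 j
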